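/- Let G be a connected bipartite graph with bipartition V1 ∪ V2 and let x1 ∈ V1 be a vertex of degree 1 with N_G(x1) ≠ V2 and |V1| ≥ 2, |V2| ≥ 2. Then x1 is a shedding vertex of the complement graph Ḡ: for every independent set S of Ḡ \ N_Ḡ[x1], there exists v ∈ N_Ḡ(x1) such that S ∪ {v} is independent in Ḡ \ {x1}. -/

import Mathlib

open SimpleGraph

variable {V : Type*}

/-- `S` is an independent set of `G`: no two (distinct) members are adjacent. -/
def IsIndepOn (G : SimpleGraph V) (S : Set V) : Prop :=
  S.Pairwise fun u w => ¬ G.Adj u w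

/-- The closed neighborhood `N_G[v]` of `v` in `G`. -/
def closedNbhd (G : SimpleGraph V) (v : V) : Set V :=
  {u | G.Adj v u} ∪ {v}

/-- Vertex decomposability of the independence complex of the induced subgraph of `G`
on the vertex set `A`. -/
inductive VertexDecomp (G : SimpleGraph V) : Set V → Prop
  | discrete (A : Set V) (h : ∀ u ∈ A, ∀ w ∈ A, ¬ G.Adj u w) : VertexDecomp G A
  | shed (A : Set V) (v : V) (hv : v ∈ A)
      (hshed : ∀ S : Set V, S ⊆ A \ closedNbhd G v → IsIndepOn G S →
        ∃ x ∈ A, G.Adj v x ∧ IsIndepOn G (insert x S))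
      (hdel : VertexDecomp G (A \ {v}))
      (hlink : VertexDecomp G (A \ closedNbhd G v)) : VertexDecomp G A

/-- `v` is a shedding vertex of `H`: every independent set avoiding `N_H[v]` can be
extended by a neighbor of `v` to an independent set of `H \ {v}`. -/
def IsSheddingVertex (H : SimpleGraph V) (v : V) : Prop :=
  ∀ S : Set V, S ∩ closedNbhd H v = ∅ → IsIndepOn H S →
    ∃ x, H.Adj v x ∧ IsIndepOn H (insert x S)

theorem degree_one_vertex_is_shedding_of_complement {V : Type*} [Fintype V]
    (G : SimpleGraph V) [DecidableRel G.Adj] (V1 V2 : Set V)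
    (hunion : V1 ∪ V2 = Set.univ) (hdisj : Disjoint V1 V2)
    (hbip : ∀ u w, G.Adj u w → (u ∈ V1 ∧ w ∈ V2) ∨ (u ∈ V2 ∧ w ∈ V1))
    (hconn : G.Connected)
    (x1 : V) (hx1 : x1 ∈ V1) (hdeg : G.degree x1 = 1)
    (hne : G.neighborSet x1 ≠ V2)
    (hV1 : 2 ≤ V1.ncard) (hV2 : 2 ≤ V2.ncard) :
    IsSheddingVertex Gᶜ x1 := by
  classical
  -- the unique neighbor of x1
  obtain ⟨y, hy⟩ : ∃ y, G.neighborFinset x1 = {y} :=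
    Finset.card_eq_one.mp hdeg
  have hyset : G.neighborSet x1 = {y} := by
    ext u
    simp only [SimpleGraph.mem_neighborSet, ← SimpleGraph.mem_neighborFinset, hy]
    simp
  have hadjy : G.Adj x1 y := by
    have : y ∈ G.neighborSet x1 := by rw [hyset]; rfl
    exact this
  have hyV2 : y ∈ V2 := by
    rcases hbip x1 y hadjy with ⟨_, h⟩ | ⟨h, _⟩
    · exact h
    · exact absurd rfl (hdisj.ne_of_mem hx1 h)
  -- there is another neighbor of y
  have hex : ∃ x, x ≠ x1 ∧ G.Adj y x := by
    by_contra hcon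
    push_neg at hcon
    -- then {x1, y} is closed under adjacency
    set C : Set V := {x1, y} with hC
    have hclosed : ∀ u ∈ C, ∀ w, G.Adj u w → w ∈ C := by
      intro u hu w hadj
      rcases hu with h | h
      · subst h
        have : w ∈ G.neighborSet u := hadj
        rw [hyset] at this
        exact Or.inr this
      · subst h
        exact Or.inl (by by_contra h; exact hcon w h hadj)
    have hwalk : ∀ (a b : V), G.Walk a b → a ∈ C → b ∈ C := by
      intro a b w
      induction w with
      | nil => exact id
      | cons h _ ih => intro ha; exact ih (hclosed _ ha _ h)
    obtain ⟨a, ha, b, hb, hab⟩ := (Set.one_lt_ncard (Set.toFinite V2)).mp hV2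
    have hz : ∃ z ∈ V2, z ≠ y := by
      by_cases hay : a = y
      · exact ⟨b, hb, by rw [← hay]; exact hab.symm⟩
      · exact ⟨a, ha, hay⟩
    obtain ⟨z, hzV2, hzy⟩ := hz
    have hzx1 : z ≠ x1 := fun h => hdisj.ne_of_mem hx1 hzV2 h.symm
    have := hwalk x1 z (hconn.preconnected x1 z).some (Or.inl rfl)
    rcases this with h | h
    · exact hzx1 h
    · exact hzy h
  obtain ⟨x, hxx1, hyx⟩ := hex
  have hxy : x ≠ y := fun h => by rw [h] at hyx; exact G.irrefl hyx
  intro S hS hSind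
  -- S ⊆ {y}
  have hSy : S ⊆ {y} := by
    intro u hu
    by_contra huy
    have hu1 : u ≠ x1 := by
      intro h
      have : u ∈ S ∩ closedNbhd Gᶜ x1 := ⟨hu, Or.inr h⟩
      rw [hS] at this; exact this
    have : ¬ Gᶜ.Adj x1 u := by
      intro hadj
      have : u ∈ S ∩ closedNbhd Gᶜ x1 := ⟨hu, Or.inl hadj⟩
      rw [hS] at this; exact this
    have : G.Adj x1 u := by
      by_contra hna
      exact this ((SimpleGraph.compl_adj G x1 u).mpr ⟨fun h' => hu1 h'.symm, hna⟩)
    have : u ∈ G.neighborSet x1 := this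
    rw [hyset] at this
    exact huy this
  refine ⟨x, ⟨fun h => hxx1 h.symm, fun h => ?_⟩, ?_⟩
  · -- ¬ G.Adj x1 x
    have : x ∈ G.neighborSet x1 := h
    rw [hyset] at this
    exact hxy this
  · -- independence of insert x S
    intro u hu w hw hne'
    rcases hu with hu | hu <;> rcases hw with hw | hw
    · subst hu; subst hw; exact absurd rfl hne'
    · subst hu
      have hwy : w = y := hSy hw
      subst hwy
      intro hc
      exact hc.2 hyx.symm
    · subst hw
      have huy : u = y := hSy hu
      subst huy
      intro hc
      exact hc.2 hyx
    · exact hSind hu hw hne'
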